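/- Let P, M ∈ ℝ^{n×n} be symmetric with P positive definite and M positive semidefinite. Then the ordered eigenvalues of P(P+M) (which are real) satisfy λ_i(P)² ≤ λ_i(P(P+M)) ≤ λ_i(P+M)² for each i = 1,…,n. -/

import Mathlib

open Matrix Polynomial

lemma charpoly_diag' {n : ℕ} (d : Fin n → ℝ) :
    (Matrix.diagonal d).charpoly = ∏ i, (X - C (d i)) := by
  unfold Matrix.charpoly
  have : charmatrix (Matrix.diagonal d) = Matrix.diagonal fun i => (X : ℝ[X]) - C (d i) := by
    ext i j
    by_cases h : i = j
    · subst h; simp [charmatrix_apply_eq]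
    · simp [charmatrix_apply_ne _ _ _ h, Matrix.diagonal_apply_ne _ h]
  rw [this, Matrix.det_diagonal]

lemma charpoly_conj' {n : ℕ} (U A : Matrix (Fin n) (Fin n) ℝ) (hU : IsUnit U.det) :
    (U * A * U⁻¹).charpoly = A.charpoly := by
  have hUU : U * U⁻¹ = 1 := mul_nonsing_inv _ hU
  set f : Matrix (Fin n) (Fin n) ℝ →+* Matrix (Fin n) (Fin n) ℝ[X] :=
    (Polynomial.C : ℝ →+* ℝ[X]).mapMatrix with hf
  have hmap : ∀ B : Matrix (Fin n) (Fin n) ℝ, (B.map (Polynomial.C : ℝ → ℝ[X])) = f B :=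
    fun _ => rfl
  have hcm : ∀ B : Matrix (Fin n) (Fin n) ℝ,
      charmatrix B = Matrix.scalar (Fin n) X - f B := fun _ => rfl
  have hdet1 : (f U).det * (f U⁻¹).det = 1 := by
    rw [← det_mul, ← f.map_mul, hUU, f.map_one, det_one]
  have key : charmatrix (U * A * U⁻¹) = f U * charmatrix A * f U⁻¹ := by
    rw [hcm, hcm, mul_sub, sub_mul]
    congr 1
    · rw [← (Matrix.scalar_commute X (fun r' => Commute.all X r') (f U)).eq, mul_assoc,
        ← f.map_mul, hUU, f.map_one, mul_one]
    · rw [← f.map_mul, ← f.map_mul]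
  unfold Matrix.charpoly
  rw [key, det_mul, det_mul, mul_comm ((f U).det), mul_assoc, hdet1, mul_one]

lemma charpoly_herm {n : ℕ} {A : Matrix (Fin n) (Fin n) ℝ} (hA : A.IsHermitian) :
    A.charpoly = ∏ i, (X - C (hA.eigenvalues i)) := by
  have hsp := hA.spectral_theorem
  set U : Matrix (Fin n) (Fin n) ℝ := (hA.eigenvectorUnitary : Matrix (Fin n) (Fin n) ℝ) with hU
  have h1 : U * star U = 1 := (Matrix.mem_unitaryGroup_iff).mp hA.eigenvectorUnitary.2
  have hinv : U⁻¹ = star U := Matrix.inv_eq_right_inv h1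
  have hdU : IsUnit U.det := by
    have := congrArg Matrix.det h1
    rw [det_mul, det_one] at this
    exact IsUnit.of_mul_eq_one _ this
  have hD : Matrix.diagonal ((RCLike.ofReal : ℝ → ℝ) ∘ hA.eigenvalues)
      = Matrix.diagonal hA.eigenvalues := by
    congr 1
  calc A.charpoly = (U * Matrix.diagonal hA.eigenvalues * U⁻¹).charpoly := by
        rw [hinv, ← hD]
        exact congrArg Matrix.charpoly (hsp.trans (by rw [Unitary.conjStarAlgAut_apply]))
    _ = (Matrix.diagonal hA.eigenvalues).charpoly := charpoly_conj' _ _ hdU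
    _ = ∏ i, (X - C (hA.eigenvalues i)) := charpoly_diag' _

lemma prod_X_sub_C_roots {n : ℕ} (a : Fin n → ℝ) :
    (∏ i, (X - C (a i))).roots = Finset.univ.val.map a := by
  have : (∏ i, (X - C (a i))) = ((Finset.univ.val.map a).map (fun r => X - C r)).prod := by
    rw [Multiset.map_map]
    rfl
  rw [this, Polynomial.roots_multiset_prod_X_sub_C]

lemma mono_unique {n : ℕ} {a b : Fin n → ℝ} (ha : Monotone a) (hb : Monotone b)
    (h : ∏ i, (X - C (a i)) = (∏ i, (X - C (b i)) : ℝ[X])) : a = b := by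
  have hm : Finset.univ.val.map a = Finset.univ.val.map b := by
    rw [← prod_X_sub_C_roots a, ← prod_X_sub_C_roots b, h]
  rw [Fin.univ_val_map, Fin.univ_val_map, Multiset.coe_eq_coe] at hm
  exact List.ofFn_injective (hm.eq_of_sortedLE ha.sortedLE_ofFn hb.sortedLE_ofFn)

lemma sorted_eig {n : ℕ} {A : Matrix (Fin n) (Fin n) ℝ} (hA : A.IsHermitian)
    {a : Fin n → ℝ} (ha : Monotone a) (hca : A.charpoly = ∏ i, (X - C (a i))) :
    ∃ σ : Equiv.Perm (Fin n), a = hA.eigenvalues ∘ σ := by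
  refine ⟨Tuple.sort hA.eigenvalues, mono_unique ha (Tuple.monotone_sort hA.eigenvalues) ?_⟩
  rw [← hca, charpoly_herm hA]
  exact (Equiv.prod_comp (Tuple.sort hA.eigenvalues) (fun i => X - C (hA.eigenvalues i))).symm

-- inner = dotProduct on EuclideanSpace ℝ

lemma inner_eq_dot {n : ℕ} (x y : EuclideanSpace ℝ (Fin n)) :
    (inner ℝ x y : ℝ) = (x : Fin n → ℝ) ⬝ᵥ (y : Fin n → ℝ) := by
  simp [PiLp.inner_apply, RCLike.inner_apply, dotProduct, mul_comm]

lemma weyl {n : ℕ} {A B : Matrix (Fin n) (Fin n) ℝ} (hA : A.IsHermitian) (hB : B.IsHermitian)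
    (hd : (B - A).PosSemidef) {a b : Fin n → ℝ} (ha : Monotone a) (hb : Monotone b)
    (hca : A.charpoly = ∏ i, (X - C (a i))) (hcb : B.charpoly = ∏ i, (X - C (b i))) :
    ∀ i, a i ≤ b i := by
  classical
  obtain ⟨σ, hσ⟩ := sorted_eig hA ha hca
  obtain ⟨τ, hτ⟩ := sorted_eig hB hb hcb
  set uB : OrthonormalBasis (Fin n) ℝ (EuclideanSpace ℝ (Fin n)) :=
    hA.eigenvectorBasis.reindex σ.symm with huB
  set vB : OrthonormalBasis (Fin n) ℝ (EuclideanSpace ℝ (Fin n)) :=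
    hB.eigenvectorBasis.reindex τ.symm with hvB
  have huBj : ∀ j, (uB j : Fin n → ℝ) = hA.eigenvectorBasis (σ j) := by
    intro j; rw [huB, OrthonormalBasis.reindex_apply, Equiv.symm_symm]
  have hvBj : ∀ j, (vB j : Fin n → ℝ) = hB.eigenvectorBasis (τ j) := by
    intro j; rw [hvB, OrthonormalBasis.reindex_apply, Equiv.symm_symm]
  have hAu : ∀ j, A *ᵥ (uB j : Fin n → ℝ) = a j • (uB j : Fin n → ℝ) := by
    intro j; rw [huBj, hσ]; exact hA.mulVec_eigenvectorBasis (σ j)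
  have hBv : ∀ j, B *ᵥ (vB j : Fin n → ℝ) = b j • (vB j : Fin n → ℝ) := by
    intro j; rw [hvBj, hτ]; exact hB.mulVec_eigenvectorBasis (τ j)
  intro i
  -- subspaces
  set V : Submodule ℝ (EuclideanSpace ℝ (Fin n)) :=
    Submodule.span ℝ (Set.range (⇑uB ∘ ((↑) : ↥(Finset.Ici i) → Fin n))) with hV
  set W : Submodule ℝ (EuclideanSpace ℝ (Fin n)) :=
    Submodule.span ℝ (Set.range (⇑vB ∘ ((↑) : ↥(Finset.Iic i) → Fin n))) with hW
  have hdimV : Module.finrank ℝ V = n - i := by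
    rw [hV, finrank_span_eq_card
      ((uB.orthonormal.comp ((↑) : ↥(Finset.Ici i) → Fin n)
        Subtype.val_injective).linearIndependent)]
    have hcard : Fintype.card ↥(Finset.Ici i) = n - i.val := by
      rw [Fintype.card_coe, Fin.card_Ici]
    exact hcard
  have hdimW : Module.finrank ℝ W = i + 1 := by
    rw [hW, finrank_span_eq_card
      ((vB.orthonormal.comp ((↑) : ↥(Finset.Iic i) → Fin n)
        Subtype.val_injective).linearIndependent)]
    have hcard : Fintype.card ↥(Finset.Iic i) = i.val + 1 := by
      rw [Fintype.card_coe, Fin.card_Iic]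
    exact hcard
  -- intersection nontrivial
  have hVW : V ⊓ W ≠ ⊥ := by
    intro hbot
    have h1 := Submodule.finrank_sup_add_finrank_inf_eq V W
    rw [hbot, finrank_bot, add_zero, hdimV, hdimW] at h1
    have h2 : Module.finrank ℝ (V ⊔ W : Submodule ℝ (EuclideanSpace ℝ (Fin n))) ≤ n := by
      simpa using Submodule.finrank_le (V ⊔ W)
    omega
  obtain ⟨x, hxVW, hx0⟩ := Submodule.exists_mem_ne_zero_of_ne_bot hVW
  have hxV : x ∈ V := hxVW.1
  have hxW : x ∈ W := hxVW.2
  -- coordinates vanish off the index sets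
  have hcu0 : ∀ j : Fin n, ¬ i ≤ j → (inner ℝ (uB j) x : ℝ) = 0 := by
    intro j hj
    have hle : V ≤ LinearMap.ker ((innerSL ℝ (uB j)).toLinearMap) := by
      rw [hV, Submodule.span_le]
      rintro _ ⟨⟨k, hk⟩, rfl⟩
      have hjk : j ≠ k := fun h => hj (h ▸ Finset.mem_Ici.mp hk)
      simpa using uB.orthonormal.2 hjk
    simpa using hle hxV
  have hcv0 : ∀ j : Fin n, ¬ j ≤ i → (inner ℝ (vB j) x : ℝ) = 0 := by
    intro j hj
    have hle : W ≤ LinearMap.ker ((innerSL ℝ (vB j)).toLinearMap) := by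
      rw [hW, Submodule.span_le]
      rintro _ ⟨⟨k, hk⟩, rfl⟩
      have hjk : j ≠ k := fun h => hj (h ▸ Finset.mem_Iic.mp hk)
      simpa using vB.orthonormal.2 hjk
    simpa using hle hxW
  -- quadratic forms
  have hermdot : ∀ (M' : Matrix (Fin n) (Fin n) ℝ), M'.IsHermitian →
      ∀ (w : EuclideanSpace ℝ (Fin n)),
        ((w : Fin n → ℝ) ⬝ᵥ (M' *ᵥ (x : Fin n → ℝ))) = ((M' *ᵥ (w : Fin n → ℝ)) ⬝ᵥ x) := by
    intro M' hM' w
    have ht : M'ᵀ = M' := by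
      ext k l
      have := congrFun (congrFun hM'.eq k) l
      simpa [Matrix.conjTranspose_apply, Matrix.transpose_apply] using this
    rw [Matrix.dotProduct_mulVec, ← Matrix.mulVec_transpose, ht]
  have key : ∀ (M' : Matrix (Fin n) (Fin n) ℝ), M'.IsHermitian →
      ∀ (wB : OrthonormalBasis (Fin n) ℝ (EuclideanSpace ℝ (Fin n))) (e : Fin n → ℝ),
      (∀ j, M' *ᵥ (wB j : Fin n → ℝ) = e j • (wB j : Fin n → ℝ)) →
      (inner ℝ x (WithLp.toLp 2 (M' *ᵥ (x : Fin n → ℝ)) : EuclideanSpace ℝ (Fin n)) : ℝ)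
        = ∑ j, e j * (inner ℝ (wB j) x : ℝ) ^ 2 := by
    intro M' hM' wB e hw
    rw [← OrthonormalBasis.sum_inner_mul_inner wB]
    refine Finset.sum_congr rfl fun j _ => ?_
    have h1 : (inner ℝ (wB j) (WithLp.toLp 2 (M' *ᵥ (x : Fin n → ℝ)) :
        EuclideanSpace ℝ (Fin n)) : ℝ) = e j * (inner ℝ (wB j) x : ℝ) := by
      rw [inner_eq_dot, WithLp.ofLp_toLp, hermdot M' hM' (wB j), hw j, inner_eq_dot]
      simp [dotProduct, PiLp.smul_apply, Finset.mul_sum, mul_assoc]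
    rw [h1, real_inner_comm x (wB j)]
    ring
  have parseval : ∀ (wB : OrthonormalBasis (Fin n) ℝ (EuclideanSpace ℝ (Fin n))),
      (inner ℝ x x : ℝ) = ∑ j, (inner ℝ (wB j) x : ℝ) ^ 2 := by
    intro wB
    rw [← OrthonormalBasis.sum_inner_mul_inner wB x x]
    refine Finset.sum_congr rfl fun j _ => ?_
    rw [real_inner_comm x (wB j)]
    ring
  set N : ℝ := (inner ℝ x x : ℝ) with hN
  have hNpos : 0 < N := by
    rw [hN, real_inner_self_eq_norm_sq]
    exact pow_pos (norm_pos_iff.mpr hx0) 2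
  have hQA : a i * N ≤ (inner ℝ x (WithLp.toLp 2 (A *ᵥ (x : Fin n → ℝ)) :
      EuclideanSpace ℝ (Fin n)) : ℝ) := by
    rw [key A hA uB a hAu, parseval uB, Finset.mul_sum]
    refine Finset.sum_le_sum fun j _ => ?_
    by_cases hj : i ≤ j
    · have := ha hj
      nlinarith [sq_nonneg (inner ℝ (uB j) x : ℝ)]
    · rw [hcu0 j hj]; simp
  have hQB : (inner ℝ x (WithLp.toLp 2 (B *ᵥ (x : Fin n → ℝ)) :
      EuclideanSpace ℝ (Fin n)) : ℝ) ≤ b i * N := by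
    rw [key B hB vB b hBv, parseval vB, Finset.mul_sum]
    refine Finset.sum_le_sum fun j _ => ?_
    by_cases hj : j ≤ i
    · have := hb hj
      nlinarith [sq_nonneg (inner ℝ (vB j) x : ℝ)]
    · rw [hcv0 j hj]; simp
  have hAB : (inner ℝ x (WithLp.toLp 2 (A *ᵥ (x : Fin n → ℝ)) :
      EuclideanSpace ℝ (Fin n)) : ℝ) ≤ (inner ℝ x (WithLp.toLp 2 (B *ᵥ (x : Fin n → ℝ)) :
      EuclideanSpace ℝ (Fin n)) : ℝ) := by
    have h0 := hd.dotProduct_mulVec_nonneg (x : Fin n → ℝ)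
    rw [inner_eq_dot, inner_eq_dot, WithLp.ofLp_toLp, WithLp.ofLp_toLp]
    have hexp : ((x : Fin n → ℝ) ⬝ᵥ ((B - A) *ᵥ (x : Fin n → ℝ)))
        = (x : Fin n → ℝ) ⬝ᵥ (B *ᵥ (x : Fin n → ℝ))
          - (x : Fin n → ℝ) ⬝ᵥ (A *ᵥ (x : Fin n → ℝ)) := by
      rw [Matrix.sub_mulVec, dotProduct_sub]
    simp only [star_trivial, RCLike.re_to_real] at h0
    linarith [h0, hexp ▸ h0]
  have : a i * N ≤ b i * N := by linarith
  exact le_of_mul_le_mul_right (by linarith [this]) hNpos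

lemma charpoly_sq {n : ℕ} {A : Matrix (Fin n) (Fin n) ℝ} (hA : A.IsHermitian)
    {a : Fin n → ℝ} (ha : Monotone a) (hca : A.charpoly = ∏ i, (X - C (a i))) :
    (A * A).charpoly = ∏ i, (X - C (a i ^ 2)) := by
  obtain ⟨σ, hσ⟩ := sorted_eig hA ha hca
  have hsp := hA.spectral_theorem
  set U : Matrix (Fin n) (Fin n) ℝ := (hA.eigenvectorUnitary : Matrix (Fin n) (Fin n) ℝ) with hU
  have h1 : U * star U = 1 := (Matrix.mem_unitaryGroup_iff).mp hA.eigenvectorUnitary.2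
  have hinv : U⁻¹ = star U := Matrix.inv_eq_right_inv h1
  have hdU : IsUnit U.det := by
    have := congrArg Matrix.det h1
    rw [det_mul, det_one] at this
    exact IsUnit.of_mul_eq_one _ this
  have hD : Matrix.diagonal ((RCLike.ofReal : ℝ → ℝ) ∘ hA.eigenvalues)
      = Matrix.diagonal hA.eigenvalues := by congr 1
  have hA' : A = U * Matrix.diagonal hA.eigenvalues * U⁻¹ := by
    rw [hinv, ← hD]; exact hsp.trans (by rw [Unitary.conjStarAlgAut_apply])
  have hAA : A * A = U * Matrix.diagonal (fun i => hA.eigenvalues i ^ 2) * U⁻¹ := by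
    conv_lhs => rw [hA']
    rw [show U * Matrix.diagonal hA.eigenvalues * U⁻¹ * (U * Matrix.diagonal hA.eigenvalues * U⁻¹)
        = U * (Matrix.diagonal hA.eigenvalues * (U⁻¹ * U) * Matrix.diagonal hA.eigenvalues) * U⁻¹
      by noncomm_ring]
    rw [nonsing_inv_mul _ hdU, mul_one, diagonal_mul_diagonal]
    simp [pow_two]
  calc (A * A).charpoly
      = (Matrix.diagonal (fun i => hA.eigenvalues i ^ 2)).charpoly := by
        rw [hAA]; exact charpoly_conj' _ _ hdU
    _ = ∏ i, (X - C (hA.eigenvalues i ^ 2)) := charpoly_diag' _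
    _ = ∏ i, (X - C (a i ^ 2)) := by
        rw [← Equiv.prod_comp σ (fun i => X - C (hA.eigenvalues i ^ 2))]
        exact Finset.prod_congr rfl fun i _ => by rw [hσ]; rfl

lemma eig_pos_of_posdef {n : ℕ} {A : Matrix (Fin n) (Fin n) ℝ} (hA : A.PosDef)
    {a : Fin n → ℝ} (ha : Monotone a) (hca : A.charpoly = ∏ i, (X - C (a i))) :
    ∀ i, 0 < a i := by
  obtain ⟨σ, hσ⟩ := sorted_eig hA.1 ha hca
  intro i
  rw [hσ]
  exact hA.eigenvalues_pos (σ i)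

section
open scoped MatrixOrder

noncomputable def msqrt {n : ℕ} (A : Matrix (Fin n) (Fin n) ℝ) : Matrix (Fin n) (Fin n) ℝ :=
  CFC.sqrt A

lemma msqrt_mul_self {n : ℕ} {A : Matrix (Fin n) (Fin n) ℝ} (hA : A.PosSemidef) :
    msqrt A * msqrt A = A := CFC.sqrt_mul_sqrt_self A hA.nonneg

lemma msqrt_herm {n : ℕ} (A : Matrix (Fin n) (Fin n) ℝ) : (msqrt A).IsHermitian :=
  (CFC.sqrt_nonneg A).posSemidef.1

end

/-- For `P ≻ 0` and `M ⪰ 0` symmetric, the ordered (real) eigenvalues of `P(P+M)`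
satisfy `λ_i(P)² ≤ λ_i(P(P+M)) ≤ λ_i(P+M)²`. -/
theorem stmt17 (n : ℕ) (P M : Matrix (Fin n) (Fin n) ℝ)
    (hP : P.PosDef) (hM : M.PosSemidef)
    (lP lQ lR : Fin n → ℝ)
    (hlP : Monotone lP) (hlQ : Monotone lQ) (hlR : Monotone lR)
    (hcP : P.charpoly = ∏ i, (X - Polynomial.C (lP i)))
    (hcQ : (P + M).charpoly = ∏ i, (X - Polynomial.C (lQ i)))
    (hcR : (P * (P + M)).charpoly = ∏ i, (X - Polynomial.C (lR i))) :
    ∀ i, (lP i) ^ 2 ≤ lR i ∧ lR i ≤ (lQ i) ^ 2 := by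
  have hQ : (P + M).PosDef := hP.add_posSemidef hM
  set Q : Matrix (Fin n) (Fin n) ℝ := P + M with hQdef
  -- square roots
  set sP : Matrix (Fin n) (Fin n) ℝ := msqrt P with hsP
  set sQ : Matrix (Fin n) (Fin n) ℝ := msqrt Q with hsQ
  have hsPP : sP * sP = P := msqrt_mul_self hP.posSemidef
  have hsQQ : sQ * sQ = Q := msqrt_mul_self hQ.posSemidef
  have hsPh : sP.IsHermitian := msqrt_herm P
  have hsQh : sQ.IsHermitian := msqrt_herm Q
  have hdP : IsUnit sP.det := by
    have h2 : sP.det * sP.det = P.det := by rw [← det_mul, hsPP]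
    have := hP.det_pos
    refine isUnit_iff_ne_zero.mpr fun h0 => ?_
    rw [h0, mul_zero] at h2
    exact absurd h2.symm (ne_of_gt this)
  have hdQ : IsUnit sQ.det := by
    have h2 : sQ.det * sQ.det = Q.det := by rw [← det_mul, hsQQ]
    have := hQ.det_pos
    refine isUnit_iff_ne_zero.mpr fun h0 => ?_
    rw [h0, mul_zero] at h2
    exact absurd h2.symm (ne_of_gt this)
  have hdPmat : IsUnit P.det := by
    refine isUnit_iff_ne_zero.mpr (ne_of_gt hP.det_pos)
  -- S1 = sP Q sP
  set S1 : Matrix (Fin n) (Fin n) ℝ := sP * Q * sP with hS1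
  have hS1c : S1.charpoly = (P * Q).charpoly := by
    have h1 : sP * S1 * sP⁻¹ = P * Q := by
      rw [hS1]
      rw [show sP * (sP * Q * sP) * sP⁻¹ = (sP * sP) * Q * (sP * sP⁻¹) by noncomm_ring]
      rw [mul_nonsing_inv _ hdP, hsPP, mul_one]
    rw [← h1, charpoly_conj' _ _ hdP]
  have hS1herm : S1.IsHermitian := by
    have h := (Matrix.isHermitian_mul_mul_conjTranspose sP (hQ.1))
    rw [hsPh.eq] at h
    exact h
  have hS1sub : (S1 - P * P).PosSemidef := by
    have hps : (sP * M * sPᴴ).PosSemidef := hM.mul_mul_conjTranspose_same sP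
    have heq : S1 - P * P = sP * M * sPᴴ := by
      rw [hsPh.eq, hS1, hQdef, ← hsPP]
      noncomm_ring
    rw [heq]
    exact hps
  -- S2 = sQ P sQ
  set S2 : Matrix (Fin n) (Fin n) ℝ := sQ * P * sQ with hS2
  have hS2c : S2.charpoly = (P * Q).charpoly := by
    have h1 : sQ * S2 * sQ⁻¹ = Q * P := by
      rw [hS2, show sQ * (sQ * P * sQ) * sQ⁻¹ = (sQ * sQ) * P * (sQ * sQ⁻¹) by noncomm_ring]
      rw [mul_nonsing_inv _ hdQ, hsQQ, mul_one]
    have h2 : P * (Q * P) * P⁻¹ = P * Q := by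
      rw [show P * (Q * P) * P⁻¹ = P * Q * (P * P⁻¹) by noncomm_ring]
      rw [mul_nonsing_inv _ hdPmat, mul_one]
    calc S2.charpoly = (sQ * S2 * sQ⁻¹).charpoly := (charpoly_conj' _ _ hdQ).symm
      _ = (Q * P).charpoly := by rw [h1]
      _ = (P * (Q * P) * P⁻¹).charpoly := (charpoly_conj' _ _ hdPmat).symm
      _ = (P * Q).charpoly := by rw [h2]
  have hS2herm : S2.IsHermitian := by
    have h := (Matrix.isHermitian_mul_mul_conjTranspose sQ (hP.1))
    rw [hsQh.eq] at h
    exact h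
  have hS2sub : (Q * Q - S2).PosSemidef := by
    have hps : (sQ * M * sQᴴ).PosSemidef := hM.mul_mul_conjTranspose_same sQ
    have heq : Q * Q - S2 = sQ * M * sQᴴ := by
      rw [hsQh.eq, hS2]
      have hP' : P = Q - M := by rw [hQdef]; abel
      rw [hP', ← hsQQ]
      noncomm_ring
    rw [heq]
    exact hps
  -- positivity of lP, lQ
  have hlPpos := eig_pos_of_posdef hP hlP hcP
  have hlQpos := eig_pos_of_posdef hQ hlQ hcQ
  have hlPsqmono : Monotone (fun i => lP i ^ 2) := by
    intro i j hij
    have h1 := hlP hij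
    have h2 := (hlPpos i).le
    dsimp only
    nlinarith
  have hlQsqmono : Monotone (fun i => lQ i ^ 2) := by
    intro i j hij
    have h1 := hlQ hij
    have h2 := (hlQpos i).le
    dsimp only
    nlinarith
  -- charpolys of squares
  have hcPP : (P * P).charpoly = ∏ i, (X - C (lP i ^ 2)) := charpoly_sq hP.1 hlP hcP
  have hcQQ : (Q * Q).charpoly = ∏ i, (X - C (lQ i ^ 2)) := charpoly_sq hQ.1 hlQ hcQ
  have hcS1 : S1.charpoly = ∏ i, (X - C (lR i)) := by rw [hS1c]; exact hcR
  have hcS2 : S2.charpoly = ∏ i, (X - C (lR i)) := by rw [hS2c]; exact hcR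
  have hPPh : (P * P).IsHermitian := by
    have h := (hP.posSemidef.pow 2).1
    rwa [pow_two] at h
  have hQQh : (Q * Q).IsHermitian := by
    have h := (hQ.posSemidef.pow 2).1
    rwa [pow_two] at h
  have left := weyl hPPh hS1herm hS1sub hlPsqmono hlR hcPP hcS1
  have right := weyl hS2herm hQQh hS2sub hlR hlQsqmono hcS2 hcQQ
  exact fun i => ⟨left i, right i⟩
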